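/- arXiv:2201.05558 — 3 statements merged into one kernel-verified Lean document; each statement's English description precedes it below -/
import Mathlib

section
/- Mass conservation for the second-moment transport equation: if A(z, ξ) satisfies ∂_z A = (i c_o Ω/ω_0^2)|ξ|^2 A + (ω_0^2/(4(2π)^2 c_o^2)) ∫_{ℝ^2} Ĉ(k)[A(ξ-k) e^{i c_o z k·ζ/ω_0} − A(ξ)] dk with Ω = 0 and ζ = 0, A(0,·) ∈ L^1(ℝ^2), and Ĉ ≥ 0 integrable, then the L^1 norm ∫|A(z,ξ)|dξ satisfies the a priori bound ∫|A(z,ξ)|dξ ≤ ∫|A(0,ξ)|dξ · exp((ω_0^2 C(0)/(2c_o^2)) z), where C(0) = (2π)^{-2}∫ Ĉ(k)dk. -/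
open MeasureTheory Real Filter Topology
open scoped ENNReal NNReal


noncomputable def rseq (n : ℕ) (z : ℝ) : ℚ := (⌊z * ((n : ℝ) + 1)⌋ : ℚ) / ((n : ℚ) + 1)

lemma rseq_measurable (n : ℕ) : Measurable (rseq n) := by
  have h1 : Measurable fun z : ℝ => ⌊z * ((n : ℝ) + 1)⌋ := (measurable_id.mul_const _).floor
  exact (measurable_from_top (f := fun m : ℤ => ((m : ℚ) / ((n : ℚ) + 1)))).comp h1

lemma rseq_tendsto (z : ℝ) : Tendsto (fun n => ((rseq n z : ℚ) : ℝ)) atTop (𝓝 z) := by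
  have hval : ∀ n : ℕ, ((rseq n z : ℚ) : ℝ) = (⌊z * ((n : ℝ) + 1)⌋ : ℝ) / ((n : ℝ) + 1) := by
    intro n; rw [rseq]; push_cast; ring
  have h0 : Tendsto (fun n : ℕ => z - 1 / ((n : ℝ) + 1)) atTop (𝓝 z) := by
    have := tendsto_one_div_add_atTop_nhds_zero_nat (𝕜 := ℝ)
    simpa using tendsto_const_nhds.sub this
  refine tendsto_of_tendsto_of_tendsto_of_le_of_le h0 tendsto_const_nhds ?_ ?_
  · intro n
    have hpos : (0 : ℝ) < (n : ℝ) + 1 := by positivity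
    simp only [hval n]
    rw [sub_le_iff_le_add, div_add' _ _ _ hpos.ne', le_div_iff₀ hpos]
    have h2 : (1 / ((n : ℝ) + 1)) * ((n : ℝ) + 1) = 1 := by field_simp
    nlinarith [Int.sub_one_lt_floor (z * ((n : ℝ) + 1))]
  · intro n
    have hpos : (0 : ℝ) < (n : ℝ) + 1 := by positivity
    simp only [hval n]
    rw [div_le_iff₀ hpos]
    exact Int.floor_le _

abbrev E2 := EuclideanSpace ℝ (Fin 2)

lemma joint_aesm (A : ℝ → E2 → ℂ)
    (hcont : ∀ ξ, Continuous fun z => A z ξ)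
    (hmeas : ∀ q : ℚ, AEStronglyMeasurable (A (q : ℝ)) volume) :
    AEStronglyMeasurable (fun p : ℝ × E2 => A p.1 p.2) (volume.prod volume) := by
  classical
  set g : ℚ → E2 → ℂ := fun q => (hmeas q).mk _ with hgdef
  have hgm : ∀ q, StronglyMeasurable (g q) := fun q => (hmeas q).stronglyMeasurable_mk
  have hS : ∀ᵐ ξ : E2, ∀ q : ℚ, A (q : ℝ) ξ = g q ξ := ae_all_iff.mpr fun q => (hmeas q).ae_eq_mk
  have hprod : ∀ᵐ p : ℝ × E2 ∂(volume.prod volume), ∀ q : ℚ, A (q : ℝ) p.2 = g q p.2 :=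
    Measure.quasiMeasurePreserving_snd.ae hS
  have happrox : ∀ n : ℕ, AEStronglyMeasurable
      (fun p : ℝ × E2 => g (rseq n p.1) p.2) (volume.prod volume) := by
    intro n
    have h1 : Measurable fun p : E2 × ℚ => g p.2 p.1 :=
      measurable_from_prod_countable_left fun q => (hgm q).measurable
    have h2 : Measurable fun p : ℝ × E2 => ((p.2, rseq n p.1) : E2 × ℚ) :=
      measurable_snd.prodMk ((rseq_measurable n).comp measurable_fst)
    exact (h1.comp h2).aestronglyMeasurable
  refine aestronglyMeasurable_of_tendsto_ae atTop happrox ?_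
  filter_upwards [hprod] with p hp
  have h3 : Tendsto (fun n => A ((rseq n p.1 : ℚ) : ℝ) p.2) atTop (𝓝 (A p.1 p.2)) :=
    ((hcont p.2).tendsto p.1).comp (rseq_tendsto p.1)
  exact Tendsto.congr (fun n => hp (rseq n p.1)) h3

set_option maxHeartbeats 2000000 in
/-- A priori `L¹` bound for the second-moment transport equation with `Ω = 0`, `ζ = 0`. -/
theorem stmt_2 (ω0 co : ℝ) (hω0 : 0 < ω0) (hco : 0 < co)
    (Chat : EuclideanSpace ℝ (Fin 2) → ℝ)
    (hChat_nonneg : ∀ k, 0 ≤ Chat k) (hChat_int : Integrable Chat)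
    (C0 : ℝ) (hC0 : C0 = ((2 * π) ^ 2)⁻¹ * ∫ k, Chat k)
    (A : ℝ → EuclideanSpace ℝ (Fin 2) → ℂ)
    (hA_int : ∀ z, Integrable (A z))
    (hA_cont : Continuous fun z => ∫ ξ, ‖A z ξ‖)
    (hA_eq : ∀ z ξ, HasDerivAt (fun z' => A z' ξ)
      ((ω0 ^ 2 / (4 * (2 * π) ^ 2 * co ^ 2) : ℝ) *
        ∫ k, (Chat k : ℂ) * (A z (ξ - k) - A z ξ)) z) :
    ∀ z : ℝ, 0 ≤ z →
      (∫ ξ, ‖A z ξ‖) ≤ (∫ ξ, ‖A 0 ξ‖) * Real.exp (ω0 ^ 2 * C0 / (2 * co ^ 2) * z) := by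
  classical
  have hπ : (0 : ℝ) < π := Real.pi_pos
  set c : ℝ := ω0 ^ 2 / (4 * (2 * π) ^ 2 * co ^ 2) with hc
  have hc_pos : 0 < c := by positivity
  set M : ℝ := ∫ k, Chat k with hMdef
  have hM_nonneg : 0 ≤ M := integral_nonneg hChat_nonneg
  set K : ℝ := 2 * c * M with hKdef
  have hK_nonneg : 0 ≤ K := by positivity
  set D : ℝ → E2 → ℂ := fun z ξ => (c : ℂ) * ∫ k, (Chat k : ℂ) * (A z (ξ - k) - A z ξ) with hDdef
  have hA_eq' : ∀ z ξ, HasDerivAt (fun z' => A z' ξ) (D z ξ) z := hA_eq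
  clear hA_eq
  have hA_contz : ∀ ξ, Continuous fun z => A z ξ :=
    fun ξ => continuous_iff_continuousAt.mpr fun z => (hA_eq' z ξ).continuousAt
  have hA_jm : AEStronglyMeasurable (fun p : ℝ × E2 => A p.1 p.2) (volume.prod volume) :=
    joint_aesm A hA_contz (fun q => (hA_int q).1)
  -- joint measurability of D
  have hD_jm : AEStronglyMeasurable (fun p : ℝ × E2 => D p.1 p.2) (volume.prod volume) := by
    have hseq : ∀ n : ℕ, AEStronglyMeasurable
        (fun p : ℝ × E2 => (((n : ℝ) + 1)) • (A (p.1 + ((n : ℝ) + 1)⁻¹) p.2 - A p.1 p.2))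
        (volume.prod volume) := by
      intro n
      have hmp : MeasurePreserving (fun p : ℝ × E2 => (p.1 + ((n : ℝ) + 1)⁻¹, p.2))
          (volume.prod volume) (volume.prod volume) :=
        (measurePreserving_add_right volume _).prod (MeasurePreserving.id _)
      exact ((hA_jm.comp_quasiMeasurePreserving hmp.quasiMeasurePreserving).sub
        hA_jm).const_smul ((n : ℝ) + 1)
    refine aestronglyMeasurable_of_tendsto_ae atTop hseq (Eventually.of_forall ?_)
    intro p
    have h1 := hasDerivAt_iff_tendsto_slope.mp (hA_eq' p.1 p.2)
    have hpos : ∀ n : ℕ, (0 : ℝ) < ((n : ℝ) + 1)⁻¹ := fun n => by positivity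
    have h2 : Tendsto (fun n : ℕ => p.1 + ((n : ℝ) + 1)⁻¹) atTop (𝓝[≠] p.1) := by
      apply tendsto_nhdsWithin_of_tendsto_nhds_of_eventually_within
      · have := tendsto_one_div_add_atTop_nhds_zero_nat (𝕜 := ℝ)
        simp_rw [one_div] at this
        simpa using tendsto_const_nhds.add this
      · filter_upwards with n
        simp only [Set.mem_compl_iff, Set.mem_singleton_iff]
        intro h
        exact absurd (add_eq_left.mp h) (hpos n).ne'
    have h3 := h1.comp h2
    refine h3.congr fun n => ?_
    show slope (fun z' => A z' p.2) p.1 (p.1 + ((n : ℝ) + 1)⁻¹) = _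
    rw [slope_def_module]
    simp only [add_sub_cancel_left, inv_inv]
  set f : ℝ → ℝ := fun z => ∫ ξ, ‖A z ξ‖ with hfdef
  have hf_nonneg : ∀ z, 0 ≤ f z := fun z => integral_nonneg fun ξ => norm_nonneg _
  have hF : ∀ z, (∫⁻ ξ, ‖A z ξ‖₊ ∂volume) = ENNReal.ofReal (f z) := by
    intro z
    simp_rw [← enorm_eq_nnnorm, ← ofReal_norm]
    rw [← ofReal_integral_eq_lintegral_ofReal (hA_int z).norm
      (Eventually.of_forall fun ξ => norm_nonneg _)]
  -- key per-time-slice bound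
  have hDs : ∀ s : ℝ, (∫⁻ ξ, ‖D s ξ‖₊ ∂volume) ≤ ENNReal.ofReal K * ENNReal.ofReal (f s) := by
    intro s
    have haS : AEStronglyMeasurable (A s) volume := (hA_int s).1
    have hFs : (∫⁻ ξ, ‖A s ξ‖₊ ∂volume) = ENNReal.ofReal (f s) := hF s
    have hpt : ∀ ξ : E2, (‖D s ξ‖₊ : ℝ≥0∞) ≤
        ENNReal.ofReal c *
          ∫⁻ k, ENNReal.ofReal (Chat k) * ((‖A s (ξ - k)‖₊ : ℝ≥0∞) + ‖A s ξ‖₊) := by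
      intro ξ
      have h1 : (‖D s ξ‖₊ : ℝ≥0∞) = ENNReal.ofReal c *
          (‖∫ k, (Chat k : ℂ) * (A s (ξ - k) - A s ξ)‖₊ : ℝ≥0∞) := by
        show (‖(c : ℂ) * _‖₊ : ℝ≥0∞) = _
        rw [nnnorm_mul, ENNReal.coe_mul]
        congr 1
        rw [← enorm_eq_nnnorm, ← ofReal_norm, Complex.norm_real, Real.norm_of_nonneg hc_pos.le]
      rw [h1]
      gcongr
      calc (‖∫ k, (Chat k : ℂ) * (A s (ξ - k) - A s ξ)‖₊ : ℝ≥0∞)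
          ≤ ∫⁻ k, ‖(Chat k : ℂ) * (A s (ξ - k) - A s ξ)‖₊ :=
            enorm_integral_le_lintegral_enorm _
        _ ≤ ∫⁻ k, ENNReal.ofReal (Chat k) * ((‖A s (ξ - k)‖₊ : ℝ≥0∞) + ‖A s ξ‖₊) := by
            refine lintegral_mono fun k => ?_
            rw [nnnorm_mul, ENNReal.coe_mul]
            gcongr
            · rw [← enorm_eq_nnnorm, ← ofReal_norm, Complex.norm_real,
                Real.norm_of_nonneg (hChat_nonneg k)]
            · exact (ENNReal.coe_le_coe.mpr (nnnorm_sub_le _ _)).trans_eq (ENNReal.coe_add _ _)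
    have hsubqmp : Measure.QuasiMeasurePreserving (fun p : E2 × E2 => p.1 - p.2)
        (volume.prod volume) volume :=
      Measure.quasiMeasurePreserving_fst.comp
        (measurePreserving_sub_prod volume volume).quasiMeasurePreserving
    calc (∫⁻ ξ, ‖D s ξ‖₊ ∂volume)
        ≤ ∫⁻ ξ, ENNReal.ofReal c *
            ∫⁻ k, ENNReal.ofReal (Chat k) * ((‖A s (ξ - k)‖₊ : ℝ≥0∞) + ‖A s ξ‖₊) :=
          lintegral_mono hpt
      _ = ENNReal.ofReal c * ∫⁻ ξ, ∫⁻ k,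
            ENNReal.ofReal (Chat k) * ((‖A s (ξ - k)‖₊ : ℝ≥0∞) + ‖A s ξ‖₊) :=
          lintegral_const_mul' _ _ ENNReal.ofReal_ne_top
      _ = ENNReal.ofReal c * ∫⁻ k, ∫⁻ ξ,
            ENNReal.ofReal (Chat k) * ((‖A s (ξ - k)‖₊ : ℝ≥0∞) + ‖A s ξ‖₊) := by
          congr 1
          refine lintegral_lintegral_swap ?_
          show AEMeasurable ((fun p : E2 × E2 => ENNReal.ofReal (Chat p.2)) *
            ((fun p : E2 × E2 => (‖A s (p.1 - p.2)‖₊ : ℝ≥0∞)) +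
              fun p : E2 × E2 => (‖A s p.1‖₊ : ℝ≥0∞))) _
          refine AEMeasurable.mul ?_ (AEMeasurable.add ?_ ?_)
          · exact (ENNReal.measurable_ofReal.comp_aemeasurable
              hChat_int.1.aemeasurable).comp_quasiMeasurePreserving
              Measure.quasiMeasurePreserving_snd
          · exact haS.enorm.comp_quasiMeasurePreserving hsubqmp
          · exact haS.enorm.comp_quasiMeasurePreserving Measure.quasiMeasurePreserving_fst
      _ = ENNReal.ofReal c * ∫⁻ k, ENNReal.ofReal (Chat k) *
            (ENNReal.ofReal (f s) + ENNReal.ofReal (f s)) := by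
          congr 1
          refine lintegral_congr fun k => ?_
          rw [lintegral_const_mul' _ _ ENNReal.ofReal_ne_top]
          congr 1
          rw [lintegral_add_right' (g := fun ξ => (‖A s ξ‖₊ : ℝ≥0∞)) _
            haS.enorm]
          have htrans : (∫⁻ ξ, (‖A s (ξ - k)‖₊ : ℝ≥0∞)) = ∫⁻ ξ, (‖A s ξ‖₊ : ℝ≥0∞) :=
            (measurePreserving_sub_right volume k).lintegral_comp_emb
              (MeasurableEquiv.subRight k).measurableEmbedding
              (fun ξ => (‖A s ξ‖₊ : ℝ≥0∞))
          rw [htrans, hFs]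
      _ = ENNReal.ofReal K * ENNReal.ofReal (f s) := by
          rw [lintegral_mul_const' _ _
            (ENNReal.add_ne_top.mpr ⟨ENNReal.ofReal_ne_top, ENNReal.ofReal_ne_top⟩),
            ← ofReal_integral_eq_lintegral_ofReal hChat_int
              (Eventually.of_forall hChat_nonneg), ← hMdef]
          have h2 : ENNReal.ofReal K = ENNReal.ofReal c * ENNReal.ofReal M * 2 := by
            rw [hKdef, ENNReal.ofReal_mul (by linarith : (0:ℝ) ≤ 2 * c),
              ENNReal.ofReal_mul (by norm_num : (0:ℝ) ≤ 2), ENNReal.ofReal_ofNat]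
            ring
          rw [h2, ← two_mul]
          ring
  -- the integral inequality
  have hkey : ∀ z : ℝ, 0 ≤ z → f z ≤ f 0 + K * ∫ s in (0:ℝ)..z, f s := by
    intro z hz
    have pointwise : ∀ ξ : E2, (‖A z ξ‖₊ : ℝ≥0∞) ≤
        (‖A 0 ξ‖₊ : ℝ≥0∞) + ∫⁻ s in Set.Ioc 0 z, ‖D s ξ‖₊ := by
      intro ξ
      have h1 : (‖A z ξ‖₊ : ℝ≥0∞) ≤ (‖A 0 ξ‖₊ : ℝ≥0∞) + (‖A z ξ - A 0 ξ‖₊ : ℝ≥0∞) := by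
        simp_rw [← enorm_eq_nnnorm, ← ofReal_norm]
        rw [← ENNReal.ofReal_add (norm_nonneg _) (norm_nonneg _)]
        apply ENNReal.ofReal_le_ofReal
        have := norm_sub_norm_le (A z ξ) (A 0 ξ)
        linarith
      refine h1.trans (add_le_add le_rfl ?_)
      by_cases hI : (∫⁻ s in Set.Ioc 0 z, (‖D s ξ‖₊ : ℝ≥0∞)) = ∞
      · exact hI ▸ le_top
      · have hmeasD : Measurable fun s => D s ξ := by
          have heq : (fun s => D s ξ) = deriv fun z' => A z' ξ := by
            funext s; exact ((hA_eq' s ξ).deriv).symm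
          rw [heq]; exact measurable_deriv _
        have hint : IntegrableOn (fun s => D s ξ) (Set.Ioc 0 z) volume :=
          ⟨hmeasD.aestronglyMeasurable, lt_top_iff_ne_top.mpr hI⟩
        have hii : IntervalIntegrable (fun s => D s ξ) volume 0 z := by
          rw [intervalIntegrable_iff, Set.uIoc_of_le hz]; exact hint
        have hftc : (∫ s in (0:ℝ)..z, D s ξ) = A z ξ - A 0 ξ :=
          intervalIntegral.integral_eq_sub_of_hasDerivAt (fun s _ => hA_eq' s ξ) hii
        calc (‖A z ξ - A 0 ξ‖₊ : ℝ≥0∞)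
            = ‖∫ s in Set.Ioc 0 z, D s ξ‖₊ := by
              rw [← hftc, intervalIntegral.integral_of_le hz]
          _ ≤ ∫⁻ s in Set.Ioc 0 z, ‖D s ξ‖₊ := enorm_integral_le_lintegral_enorm _
    have hintf : IntegrableOn f (Set.Ioc 0 z) volume := hA_cont.integrableOn_Ioc
    have hIoc_nonneg : 0 ≤ ∫ s in Set.Ioc 0 z, f s :=
      setIntegral_nonneg measurableSet_Ioc fun s _ => hf_nonneg s
    have step : ENNReal.ofReal (f z) ≤ ENNReal.ofReal (f 0) +
        ENNReal.ofReal K * ENNReal.ofReal (∫ s in Set.Ioc 0 z, f s) := by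
      rw [← hF z, ← hF 0]
      calc (∫⁻ ξ, (‖A z ξ‖₊ : ℝ≥0∞))
          ≤ ∫⁻ ξ, ((‖A 0 ξ‖₊ : ℝ≥0∞) + ∫⁻ s in Set.Ioc 0 z, ‖D s ξ‖₊) :=
            lintegral_mono pointwise
        _ = (∫⁻ ξ, (‖A 0 ξ‖₊ : ℝ≥0∞)) + ∫⁻ ξ, ∫⁻ s in Set.Ioc 0 z, ‖D s ξ‖₊ :=
            lintegral_add_left'
              ((hA_int 0).1.enorm : AEMeasurable (fun ξ => (‖A 0 ξ‖₊ : ℝ≥0∞)) volume) _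
        _ = (∫⁻ ξ, (‖A 0 ξ‖₊ : ℝ≥0∞)) + ∫⁻ s in Set.Ioc 0 z, ∫⁻ ξ, ‖D s ξ‖₊ := by
            congr 1
            have h2 := hD_jm.enorm
            have h3 : (volume.restrict (Set.Ioc 0 z)).prod (volume : Measure E2)
                = ((volume : Measure ℝ).prod (volume : Measure E2)).restrict
                  ((Set.Ioc 0 z) ×ˢ Set.univ) := by
              rw [← Measure.prod_restrict, Measure.restrict_univ]
            have h1 : AEMeasurable (fun p : ℝ × E2 => (‖D p.1 p.2‖₊ : ℝ≥0∞))
                ((volume.restrict (Set.Ioc 0 z)).prod volume) := by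
              rw [h3]; exact h2.restrict
            exact (lintegral_lintegral_swap h1).symm
        _ ≤ (∫⁻ ξ, (‖A 0 ξ‖₊ : ℝ≥0∞)) +
              ∫⁻ s in Set.Ioc 0 z, ENNReal.ofReal K * ENNReal.ofReal (f s) :=
            add_le_add le_rfl (lintegral_mono fun s => hDs s)
        _ = (∫⁻ ξ, (‖A 0 ξ‖₊ : ℝ≥0∞)) +
              ENNReal.ofReal K * ∫⁻ s in Set.Ioc 0 z, ENNReal.ofReal (f s) := by
            rw [lintegral_const_mul' _ _ ENNReal.ofReal_ne_top]
        _ = (∫⁻ ξ, (‖A 0 ξ‖₊ : ℝ≥0∞)) +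
              ENNReal.ofReal K * ENNReal.ofReal (∫ s in Set.Ioc 0 z, f s) := by
            rw [← ofReal_integral_eq_lintegral_ofReal hintf
              (Eventually.of_forall fun s => hf_nonneg s)]
    have hreal : f z ≤ f 0 + K * ∫ s in Set.Ioc 0 z, f s := by
      have h2 : ENNReal.ofReal (f z) ≤
          ENNReal.ofReal (f 0 + K * ∫ s in Set.Ioc 0 z, f s) := by
        rw [ENNReal.ofReal_add (hf_nonneg 0) (mul_nonneg hK_nonneg hIoc_nonneg),
          ENNReal.ofReal_mul hK_nonneg]
        exact step
      exact (ENNReal.ofReal_le_ofReal_iff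
        (add_nonneg (hf_nonneg 0) (mul_nonneg hK_nonneg hIoc_nonneg))).mp h2
    rw [intervalIntegral.integral_of_le hz]
    exact hreal
  -- Gronwall
  intro z hz
  have hKK : ω0 ^ 2 * C0 / (2 * co ^ 2) * z = K * z := by
    rw [hC0, hKdef, hc, hMdef]; field_simp; ring
  set G : ℝ → ℝ := fun t => ∫ s in (0:ℝ)..t, f s with hGdef
  have hGderiv : ∀ t : ℝ, HasDerivAt G (f t) t := fun t =>
    intervalIntegral.integral_hasDerivAt_right (hA_cont.intervalIntegrable 0 t)
      hA_cont.aestronglyMeasurable.stronglyMeasurableAtFilter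
      hA_cont.continuousAt
  have hGcont : ContinuousOn G (Set.Icc 0 z) := fun t _ =>
    ((hGderiv t).continuousAt).continuousWithinAt
  have hGnonneg : ∀ t, t ∈ Set.Icc (0:ℝ) z → 0 ≤ G t := fun t ht =>
    intervalIntegral.integral_nonneg ht.1 fun s _ => hf_nonneg s
  have hgron := norm_le_gronwallBound_of_norm_deriv_right_le (f := G) (f' := f)
      (δ := 0) (K := K) (ε := f 0) (a := 0) (b := z) hGcont
      (fun t _ => (hGderiv t).hasDerivWithinAt)
      (by simp [hGdef])
      (fun t ht => by
        rw [Real.norm_of_nonneg (hf_nonneg t),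
          Real.norm_of_nonneg (hGnonneg t ⟨ht.1, ht.2.le⟩)]
        have := hkey t ht.1
        linarith) z ⟨hz, le_rfl⟩
  rw [Real.norm_of_nonneg (hGnonneg z ⟨hz, le_rfl⟩), sub_zero] at hgron
  have hmain : f z ≤ f 0 + K * G z := hkey z hz
  show f z ≤ f 0 * Real.exp (ω0 ^ 2 * C0 / (2 * co ^ 2) * z)
  rw [hKK]
  by_cases hK0 : K = 0
  · rw [hK0, zero_mul, Real.exp_zero, mul_one]
    rw [hK0, zero_mul, add_zero] at hmain
    exact hmain
  · have hfin : f z ≤ f 0 + K * gronwallBound 0 K (f 0) z := by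
      linarith [hmain, mul_le_mul_of_nonneg_left hgron hK_nonneg]
    rw [gronwallBound_of_K_ne_0 hK0] at hfin
    beta_reduce at hfin
    have heq : f 0 + K * (0 * Real.exp (K * z) + f 0 / K * (Real.exp (K * z) - 1))
        = f 0 * Real.exp (K * z) := by
      field_simp
      ring
    exact hfin.trans_eq heq
end

section
/- Explicit Gaussian ansatz solution of the parabolic PDE: if (a,b,c,d) solve the ODE system a' = −i(4c_oΩ/ω_0^2) b, b' = ω_0^2 D/(16c_o^2) + i(4c_oΩ/ω_0^2) b^2, c' = ω_0 D z/(8c_o) + i(4c_oΩ/ω_0^2) b c, d' = D z^2/16 + i(c_oΩ/ω_0^2) c^2, with zero initial conditions, then Â(z,x,ζ) = (2π)^2 exp(−a(z) − b(z)|x|^2 − c(z) x·ζ − d(z)|ζ|^2) solves ∂_z Â = −(i c_o Ω/ω_0^2) Δ_x Â − (ω_0^2 D/(16 c_o^2)) [|x|^2 + (z^2 c_o^2/ω_0^2)|ζ|^2 + 2(z c_o/ω_0) ζ·x] Â with Â(0,x,ζ) = (2π)^2. -/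
open Real

private lemma hasDerivAt_gauss (K A P Q : ℂ) (t : ℝ) :
    HasDerivAt (fun s : ℝ => K * Complex.exp (A - P * (s:ℂ)^2 - Q * (s:ℂ)))
      ((-(2*P*(t:ℂ)) - Q) * (K * Complex.exp (A - P * (t:ℂ)^2 - Q * (t:ℂ)))) t := by
  have hs : HasDerivAt (fun s : ℝ => (s:ℂ)) 1 t := by
    simpa using (hasDerivAt_id t).ofReal_comp
  have hsq : HasDerivAt (fun s : ℝ => P * (s:ℂ)^2) (P * (2*(t:ℂ))) t := by
    have h2 : HasDerivAt (fun s : ℝ => (s:ℂ)^2) (2*(t:ℂ)) t := by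
      simp only [pow_two]
      have := hs.mul hs
      exact this.congr_deriv (by ring)
    simpa using h2.const_mul P
  have h1 : HasDerivAt (fun s : ℝ => A - P * (s:ℂ)^2 - Q * (s:ℂ))
      (-(2*P*(t:ℂ)) - Q) t := by
    have := ((hasDerivAt_const t A).sub hsq).sub (hs.const_mul Q)
    exact this.congr_deriv (by ring)
  have := h1.cexp.const_mul K
  exact this.congr_deriv (by ring)

private lemma second_deriv_gauss (K A P Q : ℂ) (x : ℝ) (F : ℝ → ℂ)
    (hF : ∀ s, F s = K * Complex.exp (A - P * (s:ℂ)^2 - Q * (s:ℂ))) :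
    deriv (fun t => deriv (fun s => F s) t) x
      = (-(2*P) + (-(2*P*(x:ℂ)) - Q)^2) * F x := by
  have hFe : F = fun s : ℝ => K * Complex.exp (A - P * (s:ℂ)^2 - Q * (s:ℂ)) := funext hF
  have e1 : (fun t : ℝ => deriv (fun s => F s) t)
      = fun t : ℝ => (-(2*P*(t:ℂ)) - Q) * (K * Complex.exp (A - P*(t:ℂ)^2 - Q*(t:ℂ))) := by
    funext t
    rw [show (fun s => F s) = F from rfl, hFe, (hasDerivAt_gauss K A P Q t).deriv]
  rw [e1]
  have hs : HasDerivAt (fun s : ℝ => (s:ℂ)) 1 x := by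
    simpa using (hasDerivAt_id x).ofReal_comp
  have hf : HasDerivAt (fun t : ℝ => -(2*P*(t:ℂ)) - Q) (-(2*P)) x := by
    have := ((hs.const_mul (2*P)).neg).sub_const Q
    exact this.congr_deriv (by ring)
  have hprod := (hf.mul (hasDerivAt_gauss K A P Q x)).deriv
  simp only [Pi.mul_def] at hprod
  rw [hprod, hF x]
  ring
set_option maxHeartbeats 1000000 in

/-- The Gaussian ansatz built from the solution of the ODE system solves the parabolic PDE. -/
theorem stmt_6 (ω0 co D Ωf : ℝ) (hω0 : 0 < ω0) (hco : 0 < co) (hD : 0 < D)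
    (ζ1 ζ2 : ℝ)
    (fa fb fc fd : ℝ → ℂ)
    (ha0 : fa 0 = 0) (hb0 : fb 0 = 0) (hc0 : fc 0 = 0) (hd0 : fd 0 = 0)
    (ha : ∀ z, HasDerivAt fa (-Complex.I * (4 * co * Ωf / ω0 ^ 2 : ℝ) * fb z) z)
    (hb : ∀ z, HasDerivAt fb ((ω0 ^ 2 * D / (16 * co ^ 2) : ℝ)
      + Complex.I * (4 * co * Ωf / ω0 ^ 2 : ℝ) * (fb z) ^ 2) z)
    (hc : ∀ z, HasDerivAt fc ((ω0 * D * z / (8 * co) : ℝ)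
      + Complex.I * (4 * co * Ωf / ω0 ^ 2 : ℝ) * fb z * fc z) z)
    (hd : ∀ z, HasDerivAt fd ((D * z ^ 2 / 16 : ℝ)
      + Complex.I * (co * Ωf / ω0 ^ 2 : ℝ) * (fc z) ^ 2) z)
    (Ahat : ℝ → ℝ → ℝ → ℂ)
    (hAhat : ∀ z x1 x2, Ahat z x1 x2 = ((2 * π) ^ 2 : ℝ) *
      Complex.exp (-fa z - fb z * ((x1 ^ 2 + x2 ^ 2 : ℝ) : ℂ)
        - fc z * ((x1 * ζ1 + x2 * ζ2 : ℝ) : ℂ) - fd z * ((ζ1 ^ 2 + ζ2 ^ 2 : ℝ) : ℂ))) :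
    (∀ x1 x2 : ℝ, Ahat 0 x1 x2 = ((2 * π) ^ 2 : ℝ)) ∧
    ∀ z x1 x2 : ℝ,
      deriv (fun z' => Ahat z' x1 x2) z
        = -(Complex.I * (co * Ωf / ω0 ^ 2 : ℝ)) *
            (deriv (fun t => deriv (fun s => Ahat z s x2) t) x1
              + deriv (fun t => deriv (fun s => Ahat z x1 s) t) x2)
          - ((ω0 ^ 2 * D / (16 * co ^ 2) : ℝ) : ℂ) *
            (((x1 ^ 2 + x2 ^ 2 : ℝ) : ℂ)
              + ((z ^ 2 * co ^ 2 / ω0 ^ 2 * (ζ1 ^ 2 + ζ2 ^ 2) : ℝ) : ℂ)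
              + ((2 * z * co / ω0 * (x1 * ζ1 + x2 * ζ2) : ℝ) : ℂ)) * Ahat z x1 x2 := by
  have hω : (ω0:ℂ) ≠ 0 := by exact_mod_cast hω0.ne'
  have hcoz : (co:ℂ) ≠ 0 := by exact_mod_cast hco.ne'
  constructor
  · intro x1 x2
    rw [hAhat, ha0, hb0, hc0, hd0]
    simp
  intro z x1 x2
  set K : ℂ := (((2 * π) ^ 2 : ℝ) : ℂ) with hK
  -- z-derivative
  have hz : HasDerivAt (fun z' => Ahat z' x1 x2)
      ((-(-Complex.I * (4 * co * Ωf / ω0 ^ 2 : ℝ) * fb z)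
        - ((ω0 ^ 2 * D / (16 * co ^ 2) : ℝ)
            + Complex.I * (4 * co * Ωf / ω0 ^ 2 : ℝ) * (fb z) ^ 2) * ((x1 ^ 2 + x2 ^ 2 : ℝ) : ℂ)
        - ((ω0 * D * z / (8 * co) : ℝ)
            + Complex.I * (4 * co * Ωf / ω0 ^ 2 : ℝ) * fb z * fc z) * ((x1 * ζ1 + x2 * ζ2 : ℝ) : ℂ)
        - ((D * z ^ 2 / 16 : ℝ)
            + Complex.I * (co * Ωf / ω0 ^ 2 : ℝ) * (fc z) ^ 2) * ((ζ1 ^ 2 + ζ2 ^ 2 : ℝ) : ℂ))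
        * Ahat z x1 x2) z := by
    rw [hAhat z x1 x2]
    have hg := ((((ha z).neg).sub ((hb z).mul_const ((x1 ^ 2 + x2 ^ 2 : ℝ) : ℂ))).sub
        ((hc z).mul_const ((x1 * ζ1 + x2 * ζ2 : ℝ) : ℂ))).sub
        ((hd z).mul_const ((ζ1 ^ 2 + ζ2 ^ 2 : ℝ) : ℂ))
    have h2 := hg.cexp.const_mul K
    have he : (fun z' : ℝ => K * Complex.exp (-fa z' - fb z' * ((x1 ^ 2 + x2 ^ 2 : ℝ) : ℂ)
        - fc z' * ((x1 * ζ1 + x2 * ζ2 : ℝ) : ℂ) - fd z' * ((ζ1 ^ 2 + ζ2 ^ 2 : ℝ) : ℂ)))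
        = fun z' => Ahat z' x1 x2 := by
      funext z'
      rw [hAhat]
    simp only [Pi.sub_apply, Pi.neg_apply] at h2
    rw [he] at h2
    exact h2.congr_deriv (by ring)
  -- x1 second derivative
  have h2x1 : deriv (fun t => deriv (fun s => Ahat z s x2) t) x1
      = (-(2 * fb z) + (-(2 * fb z * (x1:ℂ)) - fc z * (ζ1:ℂ)) ^ 2) * Ahat z x1 x2 := by
    have := second_deriv_gauss K
      (-fa z - fb z * (x2:ℂ)^2 - fc z * ((x2:ℂ) * (ζ2:ℂ)) - fd z * ((ζ1 ^ 2 + ζ2 ^ 2 : ℝ) : ℂ))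
      (fb z) (fc z * (ζ1:ℂ)) x1 (fun s => Ahat z s x2) ?_
    · exact this
    · intro s
      simp only [hAhat]
      congr 1
      push_cast
      ring
  -- x2 second derivative
  have h2x2 : deriv (fun t => deriv (fun s => Ahat z x1 s) t) x2
      = (-(2 * fb z) + (-(2 * fb z * (x2:ℂ)) - fc z * (ζ2:ℂ)) ^ 2) * Ahat z x1 x2 := by
    have := second_deriv_gauss K
      (-fa z - fb z * (x1:ℂ)^2 - fc z * ((x1:ℂ) * (ζ1:ℂ)) - fd z * ((ζ1 ^ 2 + ζ2 ^ 2 : ℝ) : ℂ))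
      (fb z) (fc z * (ζ2:ℂ)) x2 (fun s => Ahat z x1 s) ?_
    · exact this
    · intro s
      simp only [hAhat]
      congr 1
      push_cast
      ring
  rw [hz.deriv, h2x1, h2x2]
  generalize Ahat z x1 x2 = W
  have r2 : (ω0 ^ 2 * D / (16 * co ^ 2)) * (z ^ 2 * co ^ 2 / ω0 ^ 2 * (ζ1 ^ 2 + ζ2 ^ 2))
      = D * z ^ 2 / 16 * (ζ1 ^ 2 + ζ2 ^ 2) := by
    field_simp
  have r3 : (ω0 ^ 2 * D / (16 * co ^ 2)) * (2 * z * co / ω0 * (x1 * ζ1 + x2 * ζ2))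
      = ω0 * D * z / (8 * co) * (x1 * ζ1 + x2 * ζ2) := by
    field_simp
    ring
  have c2 : ((ω0:ℂ) ^ 2 * (D:ℂ) / (16 * (co:ℂ) ^ 2)) *
        ((z:ℂ) ^ 2 * (co:ℂ) ^ 2 / (ω0:ℂ) ^ 2 * ((ζ1:ℂ) ^ 2 + (ζ2:ℂ) ^ 2))
      = (D:ℂ) * (z:ℂ) ^ 2 / 16 * ((ζ1:ℂ) ^ 2 + (ζ2:ℂ) ^ 2) := by
    exact_mod_cast r2
  have c3 : ((ω0:ℂ) ^ 2 * (D:ℂ) / (16 * (co:ℂ) ^ 2)) *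
        (2 * (z:ℂ) * (co:ℂ) / (ω0:ℂ) * ((x1:ℂ) * (ζ1:ℂ) + (x2:ℂ) * (ζ2:ℂ)))
      = (ω0:ℂ) * (D:ℂ) * (z:ℂ) / (8 * (co:ℂ)) * ((x1:ℂ) * (ζ1:ℂ) + (x2:ℂ) * (ζ2:ℂ)) := by
    exact_mod_cast r3
  push_cast
  linear_combination W * c2 + W * c3
end

section
/- Riccati solution: the solution of b'(z) = ω_0^2 D/(16 c_o^2) + i (4 c_o Ω/ω_0^2) b(z)^2 with b(0) = 0, for Ω > 0, is b(z) = (ω_0^2 D z/(16 c_o^2)) · Ψ_b(s(z)) where s(z) = z√(DΩ/(4c_o)) and Ψ_b(s) = tanh(e^{−iπ/4} s)/(e^{−iπ/4} s); equivalently b(z) = e^{iπ/4} √(ω_0^4 D/(64 c_o^3 Ω)) · tanh(e^{−iπ/4} √(DΩ/(4c_o)) z). This function is well-defined and analytic for z ≥ 0 (since cosh(e^{−iπ/4}s) has no zeros on the ray s ≥ 0). -/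
open Real

lemma tanh_hasDerivAt' (w : ℂ) (hw : Complex.cosh w ≠ 0) :
    HasDerivAt Complex.tanh (1 / Complex.cosh w ^ 2) w := by
  have h := (Complex.hasDerivAt_sinh w).div (Complex.hasDerivAt_cosh w) hw
  have heq : (Complex.cosh w * Complex.cosh w - Complex.sinh w * Complex.sinh w) /
      Complex.cosh w ^ 2 = 1 / Complex.cosh w ^ 2 := by
    rw [← sq, ← sq, Complex.cosh_sq_sub_sinh_sq]
  rw [heq] at h
  have hfun : Complex.tanh = fun w => Complex.sinh w / Complex.cosh w :=
    funext fun w => Complex.tanh_eq_sinh_div_cosh w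
  rw [hfun]; exact h

/-- The explicit solution of the Riccati equation
`b' = ω0²D/(16c²) + i(4cΩ/ω0²) b²`, `b(0) = 0`, for `Ω > 0`. -/
theorem stmt_7 (ω0 co D Ωf : ℝ) (hω0 : 0 < ω0) (hco : 0 < co) (hD : 0 < D) (hΩ : 0 < Ωf)
    (b : ℝ → ℂ)
    (hb : ∀ z : ℝ, b z = ((1 + Complex.I) / (Real.sqrt 2 : ℝ)) *
      (Real.sqrt (ω0 ^ 4 * D / (64 * co ^ 3 * Ωf)) : ℝ) *
      Complex.tanh (((1 - Complex.I) / (Real.sqrt 2 : ℝ)) *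
        (Real.sqrt (D * Ωf / (4 * co)) * z : ℝ))) :
    (∀ s : ℝ, 0 ≤ s →
      Complex.cosh (((1 - Complex.I) / (Real.sqrt 2 : ℝ)) * (s : ℂ)) ≠ 0) ∧
    b 0 = 0 ∧
    ∀ z : ℝ, 0 ≤ z →
      HasDerivAt b ((ω0 ^ 2 * D / (16 * co ^ 2) : ℝ)
        + Complex.I * (4 * co * Ωf / ω0 ^ 2 : ℝ) * (b z) ^ 2) z := by
  have h2pos : (0:ℝ) < Real.sqrt 2 := Real.sqrt_pos.mpr (by norm_num)
  have h22 : Real.sqrt 2 * Real.sqrt 2 = 2 := Real.mul_self_sqrt (by norm_num)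
  have h2ne : ((Real.sqrt 2 : ℝ) : ℂ) ≠ 0 := by exact_mod_cast h2pos.ne'
  have h22c : ((Real.sqrt 2 : ℝ) : ℂ) * ((Real.sqrt 2 : ℝ) : ℂ) = 2 := by
    rw [← Complex.ofReal_mul, h22]; norm_num
  -- Part 1
  have hcosh : ∀ s : ℝ, 0 ≤ s →
      Complex.cosh (((1 - Complex.I) / (Real.sqrt 2 : ℝ)) * (s : ℂ)) ≠ 0 := by
    intro s hs hcos
    set w : ℂ := ((1 - Complex.I) / (Real.sqrt 2 : ℝ)) * (s : ℂ) with hw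
    have hre : w.re = s / Real.sqrt 2 := by
      simp [hw, Complex.div_re, Complex.normSq, Complex.mul_re]
      field_simp
      linear_combination s * h22
    have hexp : Complex.exp w = - Complex.exp (-w) := by
      rw [Complex.cosh] at hcos
      field_simp at hcos
      linear_combination hcos
    have habs := congrArg (fun x : ℂ => ‖x‖) hexp
    rw [Complex.norm_exp, norm_neg, Complex.norm_exp] at habs
    simp only [Complex.neg_re] at habs
    have hre0 : w.re = 0 := by
      have := Real.exp_injective habs; linarith
    have hs0 : s = 0 := by
      rw [hre] at hre0; field_simp at hre0; simpa using hre0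
    rw [hs0] at hw
    simp [hw] at hcos
  refine ⟨hcosh, ?_, ?_⟩
  · rw [hb 0]; simp
  -- Part 3
  set K : ℝ := Real.sqrt (ω0 ^ 4 * D / (64 * co ^ 3 * Ωf)) with hKdef
  set L : ℝ := Real.sqrt (D * Ωf / (4 * co)) with hLdef
  set C1 : ℝ := ω0 ^ 2 * D / (16 * co ^ 2) with hC1def
  set C2 : ℝ := 4 * co * Ωf / ω0 ^ 2 with hC2def
  set f : ℂ := (1 + Complex.I) / (Real.sqrt 2 : ℝ) with hfdef
  set e : ℂ := (1 - Complex.I) / (Real.sqrt 2 : ℝ) with hedef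
  set A : ℂ := f * (K : ℂ) with hAdef
  set B : ℂ := e * (L : ℂ) with hBdef
  have hK2 : K ^ 2 = ω0 ^ 4 * D / (64 * co ^ 3 * Ωf) := Real.sq_sqrt (by positivity)
  have hL2 : L ^ 2 = D * Ωf / (4 * co) := Real.sq_sqrt (by positivity)
  have hC1pos : 0 < C1 := by rw [hC1def]; positivity
  have hKL : K * L = C1 := by
    rw [hKdef, hLdef, ← Real.sqrt_mul (by positivity)]
    have : ω0 ^ 4 * D / (64 * co ^ 3 * Ωf) * (D * Ωf / (4 * co)) = C1 ^ 2 := by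
      rw [hC1def]; field_simp; ring
    rw [this, Real.sqrt_sq hC1pos.le]
  have hC2K : C2 * K ^ 2 = C1 := by
    rw [hK2, hC2def, hC1def]; field_simp; ring
  have hfe : f * e = 1 := by
    rw [hfdef, hedef]
    field_simp
    linear_combination -h22c - Complex.I_sq
  have hf2 : f ^ 2 = Complex.I := by
    rw [hfdef]
    field_simp
    linear_combination -Complex.I * h22c + Complex.I_sq
  have hAB : A * B = (C1 : ℂ) := by
    rw [hAdef, hBdef]
    calc f * (K:ℂ) * (e * (L:ℂ)) = (f * e) * ((K:ℂ) * (L:ℂ)) := by ring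
    _ = (K:ℂ) * (L:ℂ) := by rw [hfe, one_mul]
    _ = ((K * L : ℝ) : ℂ) := by push_cast; ring
    _ = (C1 : ℂ) := by rw [hKL]
  have hA2 : Complex.I * (C2 : ℂ) * A ^ 2 = -(C1 : ℂ) := by
    rw [hAdef, mul_pow, hf2]
    have : ((K:ℂ)) ^ 2 * (C2 : ℂ) = (C1 : ℂ) := by
      norm_cast
      linear_combination hC2K
    calc Complex.I * (C2:ℂ) * (Complex.I * (K:ℂ)^2)
        = (Complex.I * Complex.I) * ((K:ℂ)^2 * (C2:ℂ)) := by ring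
    _ = -(C1:ℂ) := by rw [this, Complex.I_mul_I]; ring
  -- rewrite b
  have hbfun : b = fun z : ℝ => A * Complex.tanh (B * z) := by
    funext z
    rw [hb z, hAdef, hBdef, hfdef, hedef, hKdef, hLdef]
    push_cast
    ring_nf
  intro z hz
  have hne : Complex.cosh (B * z) ≠ 0 := by
    have := hcosh (L * z) (by positivity)
    rw [hBdef]
    rw [hedef]
    convert this using 2
    push_cast
    ring
  have hderiv : HasDerivAt b (A * (1 / Complex.cosh (B * z) ^ 2 * B)) z := by
    rw [hbfun]
    have hinner : HasDerivAt (fun w : ℂ => B * w) B (z : ℂ) := by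
      simpa using (hasDerivAt_id (z : ℂ)).const_mul B
    exact (((tanh_hasDerivAt' (B * z) hne).comp _ hinner).const_mul A).comp_ofReal
  clear_value A B f e K L C1 C2
  convert hderiv using 1
  rw [hbfun]
  simp only
  rw [Complex.tanh_eq_sinh_div_cosh]
  set c := Complex.cosh (B * z) with hcdef
  set sh := Complex.sinh (B * z) with hshdef
  have hpy : c ^ 2 - sh ^ 2 = 1 := Complex.cosh_sq_sub_sinh_sq _
  have hc2 : c ^ 2 ≠ 0 := pow_ne_zero 2 hne
  field_simp
  linear_combination (-1 : ℂ) * hAB + (C1:ℂ) * hpy + sh ^ 2 * hA2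
end
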